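/- Let a > 0 and define, for s ∈ ℝ, y(s) = −a∫₀^s(∫₀^σ sinh(t²/2) dt) dσ and z(s) = a∫₀^s(∫₀^σ cosh(t²/2) dt) dσ, and α(s) = (s, y(s), z(s)). Then α is an admissible spacelike curve in the pseudo-Galilean space G¹₃ with constant curvature κ(s) = a and torsion τ(s) = s, with tangent T(s) = (1, −a∫₀^s sinh(t²/2) dt, a∫₀^s cosh(t²/2) dt), principal normal N(s) = (0, −sinh(s²/2), cosh(s²/2)), and binormal B(s) = (0, −cosh(s²/2), sinh(s²/2)); in particular α has constant curvature and non-constant torsion (a Salkowski curve). -/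

import Mathlib

open Real intervalIntegral

/-- The second coordinate of the Salkowski-type curve of Example 4.2. -/
noncomputable def ySal (a : ℝ) : ℝ → ℝ := fun s =>
  -a * ∫ σ in (0 : ℝ)..s, ∫ t in (0 : ℝ)..σ, Real.sinh (t ^ 2 / 2)

/-- The third coordinate of the Salkowski-type curve of Example 4.2. -/
noncomputable def zSal (a : ℝ) : ℝ → ℝ := fun s =>
  a * ∫ σ in (0 : ℝ)..s, ∫ t in (0 : ℝ)..σ, Real.cosh (t ^ 2 / 2)

lemma csh {n : WithTop ℕ∞} : ContDiff ℝ n (fun t : ℝ => Real.sinh (t ^ 2 / 2)) :=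
  Real.contDiff_sinh.comp ((contDiff_id.pow 2).div_const 2)

lemma cch {n : WithTop ℕ∞} : ContDiff ℝ n (fun t : ℝ => Real.cosh (t ^ 2 / 2)) :=
  Real.contDiff_cosh.comp ((contDiff_id.pow 2).div_const 2)

lemma hDint {f : ℝ → ℝ} (hf : Continuous f) (s : ℝ) :
    HasDerivAt (fun u => ∫ t in (0:ℝ)..u, f t) (f s) s :=
  integral_hasDerivAt_right (hf.intervalIntegrable _ _)
    hf.aestronglyMeasurable.stronglyMeasurableAtFilter hf.continuousAt

lemma dsinh (s : ℝ) :
    HasDerivAt (fun u : ℝ => Real.sinh (u ^ 2 / 2)) (s * Real.cosh (s ^ 2 / 2)) s := by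
  have h : HasDerivAt (fun u : ℝ => u ^ 2 / 2) s s := by
    simpa using (hasDerivAt_pow 2 s).div_const 2
  exact ((Real.hasDerivAt_sinh (s ^ 2 / 2)).comp s h).congr_deriv (mul_comm _ _)

lemma dcosh (s : ℝ) :
    HasDerivAt (fun u : ℝ => Real.cosh (u ^ 2 / 2)) (s * Real.sinh (s ^ 2 / 2)) s := by
  have h : HasDerivAt (fun u : ℝ => u ^ 2 / 2) s s := by
    simpa using (hasDerivAt_pow 2 s).div_const 2
  exact ((Real.hasDerivAt_cosh (s ^ 2 / 2)).comp s h).congr_deriv (mul_comm _ _)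

noncomputable def gS : ℝ → ℝ := fun s => ∫ t in (0:ℝ)..s, Real.sinh (t ^ 2 / 2)
noncomputable def gC : ℝ → ℝ := fun s => ∫ t in (0:ℝ)..s, Real.cosh (t ^ 2 / 2)

lemma hgS (s : ℝ) : HasDerivAt gS (Real.sinh (s ^ 2 / 2)) s := hDint (csh (n := 0)).continuous s
lemma hgC (s : ℝ) : HasDerivAt gC (Real.cosh (s ^ 2 / 2)) s := hDint (cch (n := 0)).continuous s

lemma contgS : Continuous gS :=
  continuous_iff_continuousAt.2 fun s => (hgS s).continuousAt
lemma contgC : Continuous gC :=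
  continuous_iff_continuousAt.2 fun s => (hgC s).continuousAt

lemma hY1 (a : ℝ) (s : ℝ) : HasDerivAt (ySal a) (-a * gS s) s :=
  ((hDint contgS s).const_mul (-a))

lemma dY1 (a : ℝ) : deriv (ySal a) = fun s => -a * gS s :=
  funext fun s => (hY1 a s).deriv

lemma dY2 (a : ℝ) : deriv (deriv (ySal a)) = fun s => -a * Real.sinh (s ^ 2 / 2) := by
  rw [dY1]
  exact funext fun s => ((hgS s).const_mul (-a)).deriv

lemma dY3 (a : ℝ) :
    deriv (deriv (deriv (ySal a))) = fun s => -a * (s * Real.cosh (s ^ 2 / 2)) := by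
  rw [dY2]
  exact funext fun s => ((dsinh s).const_mul (-a)).deriv

lemma hZ1 (a : ℝ) (s : ℝ) : HasDerivAt (zSal a) (a * gC s) s :=
  ((hDint contgC s).const_mul a)

lemma dZ1 (a : ℝ) : deriv (zSal a) = fun s => a * gC s :=
  funext fun s => (hZ1 a s).deriv

lemma dZ2 (a : ℝ) : deriv (deriv (zSal a)) = fun s => a * Real.cosh (s ^ 2 / 2) := by
  rw [dZ1]
  exact funext fun s => ((hgC s).const_mul a).deriv

lemma dZ3 (a : ℝ) :
    deriv (deriv (deriv (zSal a))) = fun s => a * (s * Real.sinh (s ^ 2 / 2)) := by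
  rw [dZ2]
  exact funext fun s => ((dcosh s).const_mul a).deriv

lemma cdY (a : ℝ) : ContDiff ℝ (⊤ : ℕ∞) (ySal a) := by
  rw [contDiff_infty_iff_deriv]
  refine ⟨fun s => (hY1 a s).differentiableAt, ?_⟩
  rw [dY1, contDiff_infty_iff_deriv]
  refine ⟨fun s => ((hgS s).const_mul (-a)).differentiableAt, ?_⟩
  have : deriv (fun s => -a * gS s) = fun s => -a * Real.sinh (s ^ 2 / 2) :=
    funext fun s => ((hgS s).const_mul (-a)).deriv
  rw [this]
  exact contDiff_const.mul csh

lemma cdZ (a : ℝ) : ContDiff ℝ (⊤ : ℕ∞) (zSal a) := by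
  rw [contDiff_infty_iff_deriv]
  refine ⟨fun s => (hZ1 a s).differentiableAt, ?_⟩
  rw [dZ1, contDiff_infty_iff_deriv]
  refine ⟨fun s => ((hgC s).const_mul a).differentiableAt, ?_⟩
  have : deriv (fun s => a * gC s) = fun s => a * Real.cosh (s ^ 2 / 2) :=
    funext fun s => ((hgC s).const_mul a).deriv
  rw [this]
  exact contDiff_const.mul cch

/-- For `a > 0`, the curve `α s = (s, ySal a s, zSal a s)` is an admissible
spacelike curve in `G¹₃` with constant curvature `a` and torsion `s`, with tangent
`T s = (1, -a ∫₀ˢ sinh(t²/2), a ∫₀ˢ cosh(t²/2))`, principal normal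
`N s = (0, -sinh(s²/2), cosh(s²/2))` and binormal `B s = (0, -cosh(s²/2), sinh(s²/2))`;
in particular the curvature is constant and the torsion is non-constant (a Salkowski
curve). -/
theorem stmt_14 (a : ℝ) (ha : 0 < a) :
    ContDiff ℝ 3 (ySal a) ∧ ContDiff ℝ 3 (zSal a) ∧
    (∀ s : ℝ,
      deriv (ySal a) s = -a * ∫ t in (0 : ℝ)..s, Real.sinh (t ^ 2 / 2) ∧
      deriv (zSal a) s = a * ∫ t in (0 : ℝ)..s, Real.cosh (t ^ 2 / 2) ∧
      (deriv (deriv (ySal a)) s) ^ 2 - (deriv (deriv (zSal a)) s) ^ 2 ≠ 0 ∧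
      Real.sqrt |(deriv (deriv (ySal a)) s) ^ 2 - (deriv (deriv (zSal a)) s) ^ 2| = a ∧
      (deriv (deriv (ySal a)) s * deriv (deriv (deriv (zSal a))) s -
        deriv (deriv (deriv (ySal a))) s * deriv (deriv (zSal a)) s) / a ^ 2 = s ∧
      deriv (deriv (ySal a)) s / a = -Real.sinh (s ^ 2 / 2) ∧
      deriv (deriv (zSal a)) s / a = Real.cosh (s ^ 2 / 2)) ∧
    (∃ ε : ℝ, (ε = 1 ∨ ε = -1) ∧ ∀ s : ℝ,
      |(deriv (deriv (ySal a)) s) ^ 2 - (deriv (deriv (zSal a)) s) ^ 2| =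
        ε * ((deriv (deriv (ySal a)) s) ^ 2 - (deriv (deriv (zSal a)) s) ^ 2) ∧
      ε * deriv (deriv (zSal a)) s / a = -Real.cosh (s ^ 2 / 2) ∧
      ε * deriv (deriv (ySal a)) s / a = Real.sinh (s ^ 2 / 2)) ∧
    ¬ ∃ c : ℝ, ∀ s : ℝ,
      (deriv (deriv (ySal a)) s * deriv (deriv (deriv (zSal a))) s -
        deriv (deriv (deriv (ySal a))) s * deriv (deriv (zSal a)) s) / a ^ 2 = c := by
  have hane : a ≠ 0 := ha.ne'
  have key : ∀ s : ℝ, (deriv (deriv (ySal a)) s) ^ 2 - (deriv (deriv (zSal a)) s) ^ 2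
      = -a ^ 2 := by
    intro s
    simp only [dY2, dZ2]
    have := Real.cosh_sq_sub_sinh_sq (s ^ 2 / 2)
    linear_combination (-(a ^ 2)) * this
  have tor : ∀ s : ℝ, (deriv (deriv (ySal a)) s * deriv (deriv (deriv (zSal a))) s -
      deriv (deriv (deriv (ySal a))) s * deriv (deriv (zSal a)) s) / a ^ 2 = s := by
    intro s
    rw [dY3, dZ3]
    simp only [dY2, dZ2]
    have := Real.cosh_sq_sub_sinh_sq (s ^ 2 / 2)
    rw [div_eq_iff (pow_ne_zero 2 hane)]
    linear_combination (s * a ^ 2) * this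
  refine ⟨(cdY a).of_le (by norm_cast), (cdZ a).of_le (by norm_cast), fun s => ⟨?_, ?_, ?_, ?_, tor s, ?_, ?_⟩,
      ⟨-1, Or.inr rfl, fun s => ⟨?_, ?_, ?_⟩⟩, ?_⟩
  · rw [dY1]; rfl
  · rw [dZ1]; rfl
  · rw [key s]; exact neg_ne_zero.2 (pow_ne_zero 2 hane)
  · rw [key s, abs_of_nonpos (neg_nonpos.2 (sq_nonneg a))]
    simpa using Real.sqrt_sq ha.le
  · simp only [dY2]; field_simp; try ring
  · simp only [dZ2]; field_simp; try ring
  · rw [key s, abs_of_nonpos (neg_nonpos.2 (sq_nonneg a))]; ring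
  · simp only [dZ2]; field_simp; try ring
  · simp only [dY2]; field_simp; try ring
  · rintro ⟨c, hc⟩
    have h0 := (tor 0).symm.trans (hc 0)
    have h1 := (tor 1).symm.trans (hc 1)
    linarith [h0, h1]
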